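/- arXiv:2210.13020 — 2 statements merged into one kernel-verified Lean document; each statement's English description precedes it below -/
import Mathlib

section
/- Let s, t be monotone functions on a complete lattice such that s^* ∘ t^* ≤ t^* ∘ s^* (pointwise). Then (s ⊔ t)^* = t^* ∘ s^*. -/
/-- The least (pre)fixpoint of `y ↦ x ⊔ s y` (Knaster–Tarski); for monotone `s`
this gives the least closure above `s`. -/
def lstar {X : Type*} [CompleteLattice X] (s : X → X) (x : X) : X :=
  sInf {y | x ⊔ s y ≤ y}

section aux
variable {X : Type*} [CompleteLattice X] {s t : X → X}

lemma lstar_le {x y : X} (hy : x ⊔ s y ≤ y) : lstar s x ≤ y := sInf_le hy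

lemma prefix_lstar (hs : Monotone s) (x : X) :
    x ⊔ s (lstar s x) ≤ lstar s x := by
  have h1 : ∀ y ∈ {y | x ⊔ s y ≤ y}, x ⊔ s (lstar s x) ≤ y := by
    intro y hy
    exact sup_le (le_trans le_sup_left hy)
      (le_trans (hs (sInf_le hy)) (le_trans le_sup_right hy))
  exact le_sInf h1

lemma le_lstar (hs : Monotone s) (x : X) : x ≤ lstar s x :=
  le_trans le_sup_left (prefix_lstar hs x)

lemma map_lstar_le (hs : Monotone s) (x : X) : s (lstar s x) ≤ lstar s x :=
  le_trans le_sup_right (prefix_lstar hs x)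

lemma lstar_mono (hs : Monotone s) : Monotone (lstar s) := by
  intro a b hab
  exact lstar_le (sup_le (le_trans hab (le_lstar hs b)) (map_lstar_le hs b))

lemma lstar_idem (hs : Monotone s) (x : X) :
    lstar s (lstar s x) = lstar s x :=
  le_antisymm (lstar_le (sup_le le_rfl (map_lstar_le hs x))) (le_lstar hs _)

lemma map_le_lstar (hs : Monotone s) (x : X) : s x ≤ lstar s x :=
  le_trans (hs (le_lstar hs x)) (map_lstar_le hs x)

end aux

/-- If `s^* ∘ t^* ≤ t^* ∘ s^*` then `(s ⊔ t)^* = t^* ∘ s^*`. -/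
theorem lstar_sup_of_comm {X : Type*} [CompleteLattice X] (s t : X → X)
    (hs : Monotone s) (ht : Monotone t)
    (h : ∀ x, lstar s (lstar t x) ≤ lstar t (lstar s x)) :
    ∀ x, lstar (fun y => s y ⊔ t y) x = lstar t (lstar s x) := by
  intro x
  have hst : Monotone (fun y => s y ⊔ t y) := fun a b hab =>
    sup_le_sup (hs hab) (ht hab)
  apply le_antisymm
  · apply lstar_le
    have hx : x ≤ lstar t (lstar s x) :=
      le_trans (le_lstar hs x) (le_lstar ht _)
    have hsle : s (lstar t (lstar s x)) ≤ lstar t (lstar s x) := by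
      calc s (lstar t (lstar s x)) ≤ lstar s (lstar t (lstar s x)) :=
            map_le_lstar hs _
        _ ≤ lstar t (lstar s (lstar s x)) := h _
        _ = lstar t (lstar s x) := by rw [lstar_idem hs]
    exact sup_le hx (sup_le hsle (map_lstar_le ht _))
  · have h1 : lstar s x ≤ lstar (fun y => s y ⊔ t y) x :=
      lstar_le (sup_le (le_lstar hst x)
        (le_trans le_sup_left (map_lstar_le hst x)))
    calc lstar t (lstar s x) ≤ lstar t (lstar (fun y => s y ⊔ t y) x) :=
          lstar_mono ht h1
      _ ≤ lstar (fun y => s y ⊔ t y) x :=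
          lstar_le (sup_le le_rfl
            (le_trans le_sup_right (map_lstar_le hst x)))
end

section
/- Let H be a set of hypotheses. For every language L, (cl_H(L))^* ⊆ cl_H(L^*), where ^* on languages denotes Kleene star. -/
/-- The one-step function associated with a set `H` of hypotheses `e ≤ f`
(pairs of regular expressions): it adds `u·⟦e⟧·v` whenever `u·⟦f⟧·v ⊆ L`. -/
def onestep {α : Type*} (H : Set (RegularExpression α × RegularExpression α))
    (L : Language α) : Language α :=
  {w | ∃ p ∈ H, ∃ u v : List α,
    (∀ x ∈ p.2.matches', u ++ x ++ v ∈ L) ∧ ∃ x ∈ p.1.matches', w = u ++ x ++ v}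

/-- The `H`-closure of a language: the least closure above the one-step function of `H`. -/
def clH {α : Type*} (H : Set (RegularExpression α × RegularExpression α)) :
    Language α → Language α :=
  lstar (onestep H)

section aux
variable {α : Type*} (H : Set (RegularExpression α × RegularExpression α))

lemma onestep_mono : Monotone (onestep H) := by
  intro A B hAB w hw
  obtain ⟨p, hp, u, v, h1, h2⟩ := hw
  exact ⟨p, hp, u, v, fun x hx => hAB (h1 x hx), h2⟩

lemma lstar_le_of {s : Language α → Language α} {x y : Language α}
    (h : x ⊔ s y ≤ y) : lstar s x ≤ y := sInf_le h

lemma le_clH (L : Language α) : L ≤ clH H L := by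
  apply le_sInf; intro y hy; exact le_trans le_sup_left hy

lemma clH_prefix (L : Language α) : L ⊔ onestep H (clH H L) ≤ clH H L := by
  apply le_sInf
  intro y hy
  refine le_trans (sup_le_sup_left (onestep_mono H (sInf_le hy)) L) hy

lemma onestep_clH_le (L : Language α) : onestep H (clH H L) ≤ clH H L :=
  le_trans le_sup_right (clH_prefix H L)

lemma clH_mono : Monotone (clH H) := by
  intro A B hAB
  apply lstar_le_of
  exact sup_le (le_trans hAB (le_clH H B)) (onestep_clH_le H B)

lemma mul_clH_le (A B : Language α) : A * clH H B ≤ clH H (A * B) := by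
  have hY : clH H B ≤ {w | ∀ a ∈ A, a ++ w ∈ clH H (A * B)} := by
    apply lstar_le_of
    apply sup_le
    · intro w hw a ha
      exact le_clH H (A * B) (Language.append_mem_mul ha hw)
    · rintro w ⟨p, hp, u, v, h1, x, hx, rfl⟩ a ha
      apply onestep_clH_le H (A * B)
      refine ⟨p, hp, a ++ u, v, fun y hy => ?_, x, hx, by simp⟩
      have := h1 y hy a ha
      simpa using this
  rintro w hw
  replace hw := Language.mem_mul.mp hw
  obtain ⟨a, ha, b, hb, rfl⟩ := hw
  exact hY hb a ha

lemma clH_mul_le (A B : Language α) : clH H A * B ≤ clH H (A * B) := by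
  have hY : clH H A ≤ {w | ∀ b ∈ B, w ++ b ∈ clH H (A * B)} := by
    apply lstar_le_of
    apply sup_le
    · intro w hw b hb
      exact le_clH H (A * B) (Language.append_mem_mul hw hb)
    · rintro w ⟨p, hp, u, v, h1, x, hx, rfl⟩ b hb
      apply onestep_clH_le H (A * B)
      refine ⟨p, hp, u, v ++ b, fun y hy => ?_, x, hx, by simp⟩
      have := h1 y hy b hb
      simpa using this
  rintro w hw
  replace hw := Language.mem_mul.mp hw
  obtain ⟨a, ha, b, hb, rfl⟩ := hw
  exact hY ha b hb

lemma clH_idem (L : Language α) : clH H (clH H L) ≤ clH H L :=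
  lstar_le_of (sup_le le_rfl (onestep_clH_le H L))

lemma clH_mul_clH_le (A B : Language α) : clH H A * clH H B ≤ clH H (A * B) := by
  calc clH H A * clH H B ≤ clH H (A * clH H B) := clH_mul_le H A _
    _ ≤ clH H (clH H (A * B)) := clH_mono H (mul_clH_le H A B)
    _ ≤ clH H (A * B) := clH_idem H _

end aux

/-- `(cl_H(L))^* ⊆ cl_H(L^*)` where `^*` is the Kleene star of languages. -/
theorem clH_kstar_le {α : Type*} (H : Set (RegularExpression α × RegularExpression α))
    (L : Language α) : KStar.kstar (clH H L) ≤ clH H (KStar.kstar L) := by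
  intro w hw
  replace hw := Language.mem_kstar.mp hw
  obtain ⟨S, rfl, hS⟩ := hw
  induction S with
  | nil => exact le_clH H _ (Language.nil_mem_kstar _)
  | cons a S ih =>
    have h1 : a ∈ clH H L := hS a (by simp)
    have h2 : S.flatten ∈ clH H (KStar.kstar L) := ih (fun y hy => hS y (by simp [hy]))
    have : a ++ S.flatten ∈ clH H L * clH H (KStar.kstar L) :=
      Language.append_mem_mul h1 h2
    have h3 := clH_mul_clH_le H L (KStar.kstar L) this
    refine clH_mono H ?_ h3
    intro x hx
    replace hx := Language.mem_mul.mp hx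
    obtain ⟨u, hu, v, hv, rfl⟩ := hx
    refine Language.mem_kstar.mpr ?_; rw [Language.mem_kstar] at hv
    obtain ⟨T, rfl, hT⟩ := hv
    refine ⟨u :: T, by simp, fun y hy => ?_⟩
    rcases List.mem_cons.mp hy with rfl | hy
    · exact hu
    · exact hT y hy
end
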